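/- Let n, n', x, x' be natural numbers with x ≤ n, x' ≤ n', and m := x + x' ≤ n ≤ n'. Then both one-tailed Fisher exact p-values satisfy P_L(x) ≥ C(n,m)/C(n+n',m) and P_R(x) ≥ C(n,m)/C(n+n',m); that is, the minimum attainable p-value ψ(m) = C(n,m)/C(n+n',m) is a lower bound on the p-value of any contingency table with margins m, n, n'. -/

import Mathlib

/-- The hypergeometric probability q(X) = C(n,X)·C(n',m−X) / C(n+n',m). -/
def hypergeomProb (n n' m X : ℕ) : ℚ :=
  (n.choose X * n'.choose (m - X) : ℚ) / ((n + n').choose m)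

/-- Left-tail Fisher exact p-value: P_L(x) = Σ_{X=0}^{x} q(X). -/
def PLeft (n n' m x : ℕ) : ℚ :=
  ∑ X ∈ Finset.range (x + 1), hypergeomProb n n' m X

/-- Right-tail Fisher exact p-value: P_R(x) = Σ_{X=x}^{m} q(X). -/
def PRight (n n' m x : ℕ) : ℚ :=
  ∑ X ∈ Finset.Icc x m, hypergeomProb n n' m X

lemma key_choose (n n' x x' : ℕ) (hm : x + x' ≤ n) (hnn' : n ≤ n') :
    n.choose (x + x') ≤ n.choose x * n'.choose x' := by
  have h1 : n.choose (x + x') * (x + x').choose x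
      = n.choose x * (n - x).choose x' := by
    have := Nat.choose_mul (n := n) (k := x + x') (s := x) (Nat.le_add_right _ _)
    simpa using this
  calc n.choose (x + x') ≤ n.choose (x + x') * (x + x').choose x := by
        have : 0 < (x + x').choose x := Nat.choose_pos (Nat.le_add_right _ _)
        nlinarith [Nat.choose_pos (Nat.le_add_right x x')]
    _ = n.choose x * (n - x).choose x' := h1
    _ ≤ n.choose x * n'.choose x' := by
        exact Nat.mul_le_mul_left _ (Nat.choose_le_choose _ (le_trans (Nat.sub_le _ _) hnn'))

theorem min_pvalue_lower_bounds_tails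
    (n n' x x' : ℕ) (hx : x ≤ n) (hx' : x' ≤ n')
    (hm : x + x' ≤ n) (hnn' : n ≤ n') :
    (n.choose (x + x') : ℚ) / ((n + n').choose (x + x')) ≤
      PLeft n n' (x + x') x ∧
    (n.choose (x + x') : ℚ) / ((n + n').choose (x + x')) ≤
      PRight n n' (x + x') x := by
  set m := x + x' with hmdef
  have hden : (0 : ℚ) < ((n + n').choose m : ℚ) := by
    exact_mod_cast Nat.choose_pos (le_trans hm (Nat.le_add_right _ _))
  have hq_nonneg : ∀ X, 0 ≤ hypergeomProb n n' m X := by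
    intro X
    unfold hypergeomProb
    positivity
  constructor
  · -- PLeft: single term X = x
    have hterm : (n.choose m : ℚ) / ((n + n').choose m) ≤ hypergeomProb n n' m x := by
      unfold hypergeomProb
      have h2 : m - x = x' := by omega
      rw [h2]
      have hk : (n.choose m : ℚ) ≤ n.choose x * n'.choose x' := by
        exact_mod_cast key_choose n n' x x' hm hnn'
      gcongr
    calc (n.choose m : ℚ) / ((n + n').choose m) ≤ hypergeomProb n n' m x := hterm
      _ ≤ PLeft n n' m x := by
          apply Finset.single_le_sum (f := fun X => hypergeomProb n n' m X)
            (fun i _ => hq_nonneg i) (Finset.self_mem_range_succ x)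
  · -- PRight: single term X = m
    have hterm : (n.choose m : ℚ) / ((n + n').choose m) = hypergeomProb n n' m m := by
      unfold hypergeomProb
      simp
    rw [hterm]
    apply Finset.single_le_sum (f := fun X => hypergeomProb n n' m X)
      (fun i _ => hq_nonneg i)
    simp [Finset.mem_Icc, hmdef, Nat.le_add_right]
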